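/- Let σ, ρ > 0 and let φ_μ denote the N(μ, σ²) density. For subsets I, J ⊆ {1,…,k} with m = |I ∩ J|, defining h_I(y₁,…,y_k) = ∏_{i=1}^k [½ φ_{ρ·1{i∈I}}(y_i) + ½ φ_{−ρ·1{i∈I}}(y_i)] and f = ∏_{i=1}^k φ₀(y_i), one has ∫ h_I h_J / f = (cosh(ρ²/σ²))^m. -/

import Mathlib

open MeasureTheory ProbabilityTheory

/-- Density of the `N(m, σ²)` distribution. -/
noncomputable def gpdf (m σ x : ℝ) : ℝ :=
  (Real.sqrt (2 * Real.pi * σ ^ 2))⁻¹ * Real.exp (-(x - m) ^ 2 / (2 * σ ^ 2))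

lemma gpdf_eq (m σ : ℝ) : gpdf m σ = gaussianPDFReal m ⟨σ ^ 2, sq_nonneg σ⟩ := by
  ext x
  simp [gpdf, gaussianPDFReal]
  rfl

lemma integral_gpdf {σ : ℝ} (hσ : 0 < σ) (m : ℝ) : ∫ x, gpdf m σ x = 1 := by
  rw [gpdf_eq]
  refine integral_gaussianPDFReal_eq_one m ?_
  intro h
  have : (σ : ℝ) ^ 2 = 0 := congrArg NNReal.toReal h
  exact (by positivity : (0:ℝ) < σ ^ 2).ne' this

lemma integrable_gpdf (m σ : ℝ) : Integrable (gpdf m σ) := by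
  rw [gpdf_eq]; exact integrable_gaussianPDFReal _ _

lemma gpdf_pos {σ : ℝ} (hσ : 0 < σ) (m x : ℝ) : 0 < gpdf m σ x :=
  mul_pos (inv_pos.2 (Real.sqrt_pos.2 (by positivity))) (Real.exp_pos _)

lemma gpdf_key {σ : ℝ} (hσ : 0 < σ) (a b x : ℝ) :
    gpdf a σ x * gpdf b σ x / gpdf 0 σ x = Real.exp (a * b / σ ^ 2) * gpdf (a + b) σ x := by
  have hs : (Real.sqrt (2 * Real.pi * σ ^ 2))⁻¹ ≠ 0 :=
    inv_ne_zero (ne_of_gt (Real.sqrt_pos.2 (by positivity)))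
  have hσ2 : (σ:ℝ) ^ 2 ≠ 0 := by positivity
  unfold gpdf
  have key : ∀ u v w : ℝ, ((Real.sqrt (2 * Real.pi * σ ^ 2))⁻¹ * Real.exp u) *
      ((Real.sqrt (2 * Real.pi * σ ^ 2))⁻¹ * Real.exp v) /
      ((Real.sqrt (2 * Real.pi * σ ^ 2))⁻¹ * Real.exp w) =
      (Real.sqrt (2 * Real.pi * σ ^ 2))⁻¹ * Real.exp (u + v - w) := by
    intro u v w
    rw [Real.exp_sub, Real.exp_add]
    field_simp
  rw [key, mul_comm (Real.exp (a * b / σ ^ 2)),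
    mul_assoc ((Real.sqrt (2 * Real.pi * σ ^ 2))⁻¹), ← Real.exp_add]
  congr 2
  field_simp
  ring

lemma onedim {σ : ℝ} (hσ : 0 < σ) (a b : ℝ) :
    ∫ y : ℝ, (2⁻¹ * gpdf a σ y + 2⁻¹ * gpdf (-a) σ y) *
      (2⁻¹ * gpdf b σ y + 2⁻¹ * gpdf (-b) σ y) / gpdf 0 σ y
      = Real.cosh (a * b / σ ^ 2) := by
  have hfun : (fun y : ℝ => (2⁻¹ * gpdf a σ y + 2⁻¹ * gpdf (-a) σ y) *
      (2⁻¹ * gpdf b σ y + 2⁻¹ * gpdf (-b) σ y) / gpdf 0 σ y) =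
      fun y => 4⁻¹ * (Real.exp (a * b / σ ^ 2) * gpdf (a + b) σ y)
        + 4⁻¹ * (Real.exp (-(a * b) / σ ^ 2) * gpdf (a + -b) σ y)
        + 4⁻¹ * (Real.exp (-(a * b) / σ ^ 2) * gpdf (-a + b) σ y)
        + 4⁻¹ * (Real.exp (a * b / σ ^ 2) * gpdf (-a + -b) σ y) := by
    funext y
    have h0 : gpdf 0 σ y ≠ 0 := (gpdf_pos hσ 0 y).ne'
    have e1 := gpdf_key hσ a b y
    have e2 := gpdf_key hσ a (-b) y
    have e3 := gpdf_key hσ (-a) b y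
    have e4 := gpdf_key hσ (-a) (-b) y
    rw [show a * -b = -(a*b) by ring] at e2
    rw [show -a * b = -(a*b) by ring] at e3
    rw [show -a * -b = a*b by ring] at e4
    rw [← e1, ← e2, ← e3, ← e4]
    field_simp
    ring
  rw [hfun]
  have i1 : Integrable (fun y => 4⁻¹ * (Real.exp (a * b / σ ^ 2) * gpdf (a + b) σ y)) :=
    ((integrable_gpdf _ _).const_mul _).const_mul _
  have i2 : Integrable (fun y => 4⁻¹ * (Real.exp (-(a * b) / σ ^ 2) * gpdf (a + -b) σ y)) :=
    ((integrable_gpdf _ _).const_mul _).const_mul _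
  have i3 : Integrable (fun y => 4⁻¹ * (Real.exp (-(a * b) / σ ^ 2) * gpdf (-a + b) σ y)) :=
    ((integrable_gpdf _ _).const_mul _).const_mul _
  have i4 : Integrable (fun y => 4⁻¹ * (Real.exp (a * b / σ ^ 2) * gpdf (-a + -b) σ y)) :=
    ((integrable_gpdf _ _).const_mul _).const_mul _
  have i12 : Integrable (fun y => 4⁻¹ * (Real.exp (a * b / σ ^ 2) * gpdf (a + b) σ y)
      + 4⁻¹ * (Real.exp (-(a * b) / σ ^ 2) * gpdf (a + -b) σ y)) := i1.add i2
  have i123 : Integrable (fun y => 4⁻¹ * (Real.exp (a * b / σ ^ 2) * gpdf (a + b) σ y)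
      + 4⁻¹ * (Real.exp (-(a * b) / σ ^ 2) * gpdf (a + -b) σ y)
      + 4⁻¹ * (Real.exp (-(a * b) / σ ^ 2) * gpdf (-a + b) σ y)) := i12.add i3
  rw [integral_add i123 i4, integral_add i12 i3, integral_add i1 i2,
    integral_const_mul, integral_const_mul, integral_const_mul, integral_const_mul,
    integral_const_mul, integral_const_mul, integral_const_mul, integral_const_mul,
    integral_gpdf hσ, integral_gpdf hσ, integral_gpdf hσ, integral_gpdf hσ,
    Real.cosh_eq]
  ring

theorem stmt10 (σ ρ : ℝ) (hσ : 0 < σ) (hρ : 0 < ρ) (k : ℕ) (I J : Finset (Fin k)) :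
    (∫ y : Fin k → ℝ,
        (∏ i, (2⁻¹ * gpdf (if i ∈ I then ρ else 0) σ (y i) +
            2⁻¹ * gpdf (if i ∈ I then -ρ else 0) σ (y i))) *
          (∏ i, (2⁻¹ * gpdf (if i ∈ J then ρ else 0) σ (y i) +
            2⁻¹ * gpdf (if i ∈ J then -ρ else 0) σ (y i))) / ∏ i, gpdf 0 σ (y i)) =
      (Real.cosh (ρ ^ 2 / σ ^ 2)) ^ (I ∩ J).card := by
  set aI : Fin k → ℝ := fun i => if i ∈ I then ρ else 0 with haI
  set aJ : Fin k → ℝ := fun i => if i ∈ J then ρ else 0 with haJ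
  have hnegI : ∀ i, (if i ∈ I then -ρ else 0) = -aI i := by
    intro i; rw [apply_ite Neg.neg, neg_zero]
  have hnegJ : ∀ i, (if i ∈ J then -ρ else 0) = -aJ i := by
    intro i; rw [apply_ite Neg.neg, neg_zero]
  have hinteg : (fun y : Fin k → ℝ =>
      (∏ i, (2⁻¹ * gpdf (aI i) σ (y i) + 2⁻¹ * gpdf (if i ∈ I then -ρ else 0) σ (y i))) *
        (∏ i, (2⁻¹ * gpdf (aJ i) σ (y i) + 2⁻¹ * gpdf (if i ∈ J then -ρ else 0) σ (y i))) /
        ∏ i, gpdf 0 σ (y i)) =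
      fun y => ∏ i, ((2⁻¹ * gpdf (aI i) σ (y i) + 2⁻¹ * gpdf (-aI i) σ (y i)) *
        (2⁻¹ * gpdf (aJ i) σ (y i) + 2⁻¹ * gpdf (-aJ i) σ (y i)) / gpdf 0 σ (y i)) := by
    funext y
    simp only [hnegI, hnegJ]
    rw [← Finset.prod_mul_distrib, ← Finset.prod_div_distrib]
  rw [hinteg]
  rw [MeasureTheory.integral_fintype_prod_volume_eq_prod (f := fun i y =>
      (2⁻¹ * gpdf (aI i) σ y + 2⁻¹ * gpdf (-aI i) σ y) *
      (2⁻¹ * gpdf (aJ i) σ y + 2⁻¹ * gpdf (-aJ i) σ y) / gpdf 0 σ y)]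
  have hone : ∀ i : Fin k, (∫ y : ℝ, (2⁻¹ * gpdf (aI i) σ y + 2⁻¹ * gpdf (-aI i) σ y) *
      (2⁻¹ * gpdf (aJ i) σ y + 2⁻¹ * gpdf (-aJ i) σ y) / gpdf 0 σ y) =
      if i ∈ I ∩ J then Real.cosh (ρ ^ 2 / σ ^ 2) else 1 := by
    intro i
    rw [onedim hσ]
    by_cases h : i ∈ I ∩ J
    · simp only [h, if_true]
      simp only [Finset.mem_inter] at h
      simp [haI, haJ, h.1, h.2, sq]
    · simp only [h, if_false]
      have : aI i * aJ i = 0 := by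
        simp only [Finset.mem_inter, not_and] at h
        by_cases hI : i ∈ I
        · simp [haI, haJ, hI, h hI]
        · simp [haI, hI]
      rw [this]
      simp
  simp only [hone]
  rw [Finset.prod_ite_mem, Finset.prod_const]
  congr 1
  rw [Finset.univ_inter]
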